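/- Let σ > 1, μ ∈ (0,1) with σ(1−μ) > 1, let ρ > 0, and let k be a nonzero integer. Define Z_k(τ) = α²ρ²(1−(−1)^k e^{−αρπ})/((k²+α²ρ²)(1−e^{−αρπ})) with α = (σ−1)τ, and Z* = μ(2σ−1)/(σ(1+μ²)−1). Then there exists a unique τ*_k > 0 such that Z_k(τ*_k) = Z*. -/

import Mathlib

open Real

/-- cosh bound -/
lemma aux_cosh_bound (x : ℝ) (hx : 0 < x) : 1 + x ^ 2 / 2 < Real.cosh x := by
  have hmono : StrictMonoOn (fun y : ℝ => Real.cosh y - (1 + y ^ 2 / 2)) (Set.Ici 0) := by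
    apply strictMonoOn_of_deriv_pos (convex_Ici 0)
    · exact (Real.continuous_cosh.sub (by continuity)).continuousOn
    · intro y hy
      rw [interior_Ici] at hy
      have h : HasDerivAt (fun y : ℝ => Real.cosh y - (1 + y ^ 2 / 2))
          (Real.sinh y - (0 + 2 * y ^ 1 / 2)) y := by
        exact (Real.hasDerivAt_cosh y).sub ((hasDerivAt_const y 1).add
          ((hasDerivAt_pow 2 y).div_const 2))
      rw [h.deriv]
      have := Real.self_lt_sinh_iff.2 hy
      simp only [pow_one]
      linarith
  have := hmono (Set.self_mem_Ici) (Set.mem_Ici.2 hx.le) hx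
  simpa using this

/-- sinh cubic bound -/
lemma aux_sinh_bound (x : ℝ) (hx : 0 < x) : x + x ^ 3 / 6 < Real.sinh x := by
  have hmono : StrictMonoOn (fun y : ℝ => Real.sinh y - (y + y ^ 3 / 6)) (Set.Ici 0) := by
    apply strictMonoOn_of_deriv_pos (convex_Ici 0)
    · exact (Real.continuous_sinh.sub (by continuity)).continuousOn
    · intro y hy
      rw [interior_Ici] at hy
      have h : HasDerivAt (fun y : ℝ => Real.sinh y - (y + y ^ 3 / 6))
          (Real.cosh y - (1 + 3 * y ^ 2 / 6)) y := by
        exact (Real.hasDerivAt_sinh y).sub ((hasDerivAt_id y).add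
          ((hasDerivAt_pow 3 y).div_const 6))
      rw [h.deriv]
      have := aux_cosh_bound y hy
      nlinarith
  have := hmono (Set.self_mem_Ici) (Set.mem_Ici.2 hx.le) hx
  simpa using this

noncomputable def Faux (K ε t : ℝ) : ℝ :=
  t ^ 2 * (1 - ε * Real.exp (-(Real.pi * t))) /
    ((K + t ^ 2) * (1 - Real.exp (-(Real.pi * t))))

lemma aux_hasDerivAt (K ε : ℝ) (hK : 0 < K) (t : ℝ) (ht : 0 < t) :
    HasDerivAt (Faux K ε)
      (((2 * t * (1 - ε * Real.exp (-(Real.pi * t))) +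
          t ^ 2 * (ε * Real.pi * Real.exp (-(Real.pi * t)))) *
          ((K + t ^ 2) * (1 - Real.exp (-(Real.pi * t)))) -
        t ^ 2 * (1 - ε * Real.exp (-(Real.pi * t))) *
          (2 * t * (1 - Real.exp (-(Real.pi * t))) +
            (K + t ^ 2) * (Real.pi * Real.exp (-(Real.pi * t))))) /
        ((K + t ^ 2) * (1 - Real.exp (-(Real.pi * t)))) ^ 2) t := by
  have hu : HasDerivAt (fun s : ℝ => Real.exp (-(Real.pi * s)))
      (Real.exp (-(Real.pi * t)) * (-Real.pi)) t := by
    have h1 : HasDerivAt (fun s : ℝ => -(Real.pi * s)) (-Real.pi) t := by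
      exact ((hasDerivAt_id t).const_mul Real.pi).neg.congr_deriv (by simp)
    exact h1.exp
  have hN : HasDerivAt (fun s : ℝ => s ^ 2 * (1 - ε * Real.exp (-(Real.pi * s))))
      ((2 * t ^ 1) * (1 - ε * Real.exp (-(Real.pi * t))) +
        t ^ 2 * (0 - ε * (Real.exp (-(Real.pi * t)) * (-Real.pi)))) t := by
    have := (hasDerivAt_pow 2 t).mul ((hasDerivAt_const t 1).sub (hu.const_mul ε))
    exact this.congr_deriv (by norm_num)
  have hD : HasDerivAt (fun s : ℝ => (K + s ^ 2) * (1 - Real.exp (-(Real.pi * s))))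
      ((0 + 2 * t ^ 1) * (1 - Real.exp (-(Real.pi * t))) +
        (K + t ^ 2) * (0 - Real.exp (-(Real.pi * t)) * (-Real.pi))) t := by
    have := ((hasDerivAt_const t K).add (hasDerivAt_pow 2 t)).mul
      ((hasDerivAt_const t 1).sub hu)
    exact this.congr_deriv (by norm_num)
  have hD0 : (K + t ^ 2) * (1 - Real.exp (-(Real.pi * t))) ≠ 0 := by
    have h1 : Real.exp (-(Real.pi * t)) < 1 :=
      Real.exp_lt_one_iff.2 (by nlinarith [Real.pi_pos])
    have : 0 < (K + t ^ 2) * (1 - Real.exp (-(Real.pi * t))) := by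
      apply mul_pos (by positivity) (by linarith)
    exact this.ne'
  have := hN.div hD hD0
  exact this.congr_deriv (by ring)

lemma aux_cont (K ε : ℝ) (hK : 0 < K) : ContinuousOn (Faux K ε) (Set.Ioi 0) :=
  fun t ht => (aux_hasDerivAt K ε hK t ht).continuousAt.continuousWithinAt

lemma aux_mono (K ε : ℝ) (hK : 1 ≤ K) (hε : ε = 1 ∨ ε = -1) :
    StrictMonoOn (Faux K ε) (Set.Ioi 0) := by
  have hK0 : 0 < K := lt_of_lt_of_le one_pos hK
  apply strictMonoOn_of_deriv_pos (convex_Ioi 0) (aux_cont K ε hK0)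
  rw [interior_Ioi]
  intro t ht
  have ht' : 0 < t := ht
  rw [(aux_hasDerivAt K ε hK0 t ht').deriv]
  set u := Real.exp (-(Real.pi * t)) with hu_def
  have hu0 : 0 < u := Real.exp_pos _
  have hu1 : u < 1 := Real.exp_lt_one_iff.2 (by nlinarith [Real.pi_pos, ht'])
  have hD0 : 0 < (K + t ^ 2) * (1 - u) := mul_pos (by positivity) (by linarith)
  apply div_pos _ (pow_pos hD0 2)
  have hnum : 2 * t * (1 - ε * u) + t ^ 2 * (ε * Real.pi * u) = 2 * t * (1 - ε * u) + t ^ 2 * (ε * Real.pi * u) := rfl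
  rcases hε with rfl | rfl
  · have h1 : 0 < 2 * t * K := by positivity
    nlinarith [mul_pos h1 (mul_pos (sub_pos.2 hu1) (sub_pos.2 hu1))]
  · -- numerator = 2tK(1-u^2) - 2πt²u(K+t²)
    have hue : u * Real.exp (Real.pi * t) = 1 := by
      rw [hu_def, ← Real.exp_add]; simp
    have hs : Real.exp (Real.pi * t) - u = 2 * Real.sinh (Real.pi * t) := by
      rw [Real.sinh_eq, hu_def]; ring
    have h12 : 1 - u ^ 2 = u * (2 * Real.sinh (Real.pi * t)) := by
      linear_combination u * hs - hue
    have hπ : 3 < Real.pi := Real.pi_gt_three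
    have hsinh : Real.pi * t + (Real.pi * t) ^ 3 / 6 < Real.sinh (Real.pi * t) :=
      aux_sinh_bound _ (by positivity)
    have h9 : 9 < Real.pi ^ 2 := by nlinarith
    have hB : (3:ℝ) ≤ K * Real.pi ^ 2 := by nlinarith
    have hC : 0 ≤ (K * Real.pi ^ 2 - 3) * (Real.pi * t ^ 3) :=
      mul_nonneg (by linarith) (by positivity)
    have key : Real.pi * t * (K + t ^ 2) < 2 * K * Real.sinh (Real.pi * t) := by
      nlinarith [mul_lt_mul_of_pos_left hsinh (by positivity : (0:ℝ) < 2 * K), hC,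
        mul_pos (mul_pos Real.pi_pos ht') hK0]
    have hgoal : (2 * t * (1 - (-1) * u) + t ^ 2 * (-1 * Real.pi * u)) *
          ((K + t ^ 2) * (1 - u)) -
        t ^ 2 * (1 - (-1) * u) * (2 * t * (1 - u) + (K + t ^ 2) * (Real.pi * u)) =
        2 * t * u * (2 * K * Real.sinh (Real.pi * t) - Real.pi * t * (K + t ^ 2)) := by
      linear_combination (2 * t * K) * h12
    rw [hgoal]
    exact mul_pos (mul_pos (by linarith : (0:ℝ) < 2 * t) hu0) (sub_pos.2 key)

lemma aux_small (K ε t : ℝ) (hK : 1 ≤ K) (hε : ε = 1 ∨ ε = -1)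
    (ht : 0 < t) (ht1 : t ≤ 1) : Faux K ε t < 4 * t := by
  set u := Real.exp (-(Real.pi * t)) with hu_def
  have hu0 : 0 < u := Real.exp_pos _
  have hu1 : u < 1 := Real.exp_lt_one_iff.2 (by nlinarith [Real.pi_pos])
  have hD0 : 0 < (K + t ^ 2) * (1 - u) := mul_pos (by positivity) (by linarith)
  rw [Faux, div_lt_iff₀ hD0]
  have hπ : 3 < Real.pi := Real.pi_gt_three
  have hπ4 : Real.pi < 4 := Real.pi_lt_four
  have hkey : u * (1 + Real.pi * t) ≤ 1 := by
    have h1 : Real.pi * t + 1 ≤ Real.exp (Real.pi * t) := Real.add_one_le_exp _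
    have hue : u * Real.exp (Real.pi * t) = 1 := by
      rw [hu_def, ← Real.exp_add]; simp
    calc u * (1 + Real.pi * t) ≤ u * Real.exp (Real.pi * t) := by
          apply mul_le_mul_of_nonneg_left (by linarith) hu0.le
      _ = 1 := hue
  set v := 1 - u with hv_def
  have hv0 : 0 < v := by simp [hv_def]; linarith
  have h2 : Real.pi * t ≤ v * (1 + Real.pi * t) := by nlinarith
  have hlt : t < 2 * v := by nlinarith [mul_pos ht (Real.pi_pos)]
  have hNle : t ^ 2 * (1 - ε * u) ≤ 2 * t ^ 2 := by
    rcases hε with rfl | rfl <;> nlinarith [sq_nonneg t, mul_pos ht ht]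
  have hfinal : 2 * t ^ 2 < 4 * t * ((K + t ^ 2) * v) := by
    nlinarith [mul_pos ht (sub_pos.2 hlt),
      mul_nonneg (mul_nonneg (sub_nonneg.2 hK) ht.le) hv0.le,
      mul_nonneg (mul_nonneg ht.le (mul_nonneg ht.le ht.le)) hv0.le]
  linarith

lemma aux_big (K ε t : ℝ) (hK : 1 ≤ K) (hε : ε = 1 ∨ ε = -1) (ht : 0 < t) :
    t ^ 2 / (K + t ^ 2) ≤ Faux K ε t := by
  set u := Real.exp (-(Real.pi * t)) with hu_def
  have hu0 : 0 < u := Real.exp_pos _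
  have hu1 : u < 1 := Real.exp_lt_one_iff.2 (by nlinarith [Real.pi_pos])
  have hK0 : (0:ℝ) < K + t ^ 2 := by positivity
  have hD0 : 0 < (K + t ^ 2) * (1 - u) := mul_pos hK0 (by linarith)
  rw [Faux, div_le_div_iff₀ hK0 hD0]
  rcases hε with rfl | rfl <;> nlinarith [sq_nonneg t, mul_pos ht ht, mul_pos (mul_pos ht ht) hu0]

theorem stmt14 (σ μ ρ : ℝ) (hσ : 1 < σ) (hμ : μ ∈ Set.Ioo (0 : ℝ) 1)
    (hnbh : 1 < σ * (1 - μ)) (hρ : 0 < ρ) (k : ℤ) (hk : k ≠ 0)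
    (Z : ℝ → ℝ)
    (hZ : ∀ τ : ℝ,
      Z τ = ((σ - 1) * τ) ^ 2 * ρ ^ 2 *
          (1 - (-1 : ℝ) ^ k * Real.exp (-((σ - 1) * τ * ρ * Real.pi))) /
        (((k : ℝ) ^ 2 + ((σ - 1) * τ) ^ 2 * ρ ^ 2) *
          (1 - Real.exp (-((σ - 1) * τ * ρ * Real.pi)))))
    (Zstar : ℝ) (hZstar : Zstar = μ * (2 * σ - 1) / (σ * (1 + μ ^ 2) - 1)) :
    ∃! τ : ℝ, 0 < τ ∧ Z τ = Zstar := by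
  obtain ⟨hμ0, hμ1⟩ := hμ
  set K : ℝ := (k : ℝ) ^ 2 with hK_def
  set ε : ℝ := (-1 : ℝ) ^ k with hε_def
  have hK : 1 ≤ K := by
    have h1 : 1 ≤ k ^ 2 := by
      rcases lt_or_gt_of_ne hk with h | h <;> nlinarith
    have : ((1 : ℤ) : ℝ) ≤ ((k ^ 2 : ℤ) : ℝ) := Int.cast_le.2 h1
    simpa [hK_def] using this
  have hK0 : 0 < K := lt_of_lt_of_le one_pos hK
  have hε : ε = 1 ∨ ε = -1 := by
    rcases Int.even_or_odd k with h | h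
    · left; exact h.neg_one_zpow
    · right; exact h.neg_one_zpow
  set c : ℝ := (σ - 1) * ρ with hc_def
  have hc0 : 0 < c := mul_pos (by linarith) hρ
  have hden : 0 < σ * (1 + μ ^ 2) - 1 := by nlinarith
  have hZ0 : 0 < Zstar := by
    rw [hZstar]; exact div_pos (by nlinarith) hden
  have hZ1 : Zstar < 1 := by
    rw [hZstar, div_lt_one hden]; nlinarith
  have hZF : ∀ τ : ℝ, Z τ = Faux K ε (c * τ) := by
    intro τ
    rw [hZ, Faux, show -(Real.pi * (c * τ)) = -((σ - 1) * τ * ρ * Real.pi) by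
      rw [hc_def]; ring]
    rw [hK_def, hε_def, hc_def]
    ring
  -- small point
  set t₀ : ℝ := min 1 (Zstar / 4) with ht₀_def
  have ht₀ : 0 < t₀ := lt_min one_pos (by linarith)
  have hFt₀ : Faux K ε t₀ < Zstar := by
    have h1 := aux_small K ε t₀ hK hε ht₀ (min_le_left _ _)
    have h2 : t₀ ≤ Zstar / 4 := min_le_right _ _
    linarith
  -- big point
  set a : ℝ := K * Zstar / (1 - Zstar) with ha_def
  have ha0 : 0 ≤ a := by
    apply div_nonneg (by positivity) (by linarith)
  set t₁ : ℝ := Real.sqrt a + 1 with ht₁_def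
  have hsq : Real.sqrt a ^ 2 = a := Real.sq_sqrt ha0
  have hsqrt0 : 0 ≤ Real.sqrt a := Real.sqrt_nonneg a
  have ht₁pos : 0 < t₁ := by positivity
  have hamul : a * (1 - Zstar) = K * Zstar := div_mul_cancel₀ _ (by linarith)
  have hGt₁ : Zstar < t₁ ^ 2 / (K + t₁ ^ 2) := by
    have ht₁sq : t₁ ^ 2 = a + 2 * Real.sqrt a + 1 := by
      rw [ht₁_def]; linear_combination hsq
    rw [lt_div_iff₀ (by positivity), ht₁sq]
    nlinarith [hamul, mul_nonneg (sub_nonneg.2 hZ1.le) hsqrt0, hZ0, hZ1, ha0, hK]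
  have hFt₁ : Zstar < Faux K ε t₁ :=
    lt_of_lt_of_le hGt₁ (aux_big K ε t₁ hK hε ht₁pos)
  have ht01 : t₀ ≤ t₁ := le_trans (min_le_left _ _) (by linarith)
  -- IVT
  have hsub : Set.Icc t₀ t₁ ⊆ Set.Ioi 0 := fun x hx => lt_of_lt_of_le ht₀ hx.1
  have hcont : ContinuousOn (Faux K ε) (Set.Icc t₀ t₁) :=
    (aux_cont K ε hK0).mono hsub
  obtain ⟨t, htmem, htF⟩ := intermediate_value_Icc ht01 hcont ⟨hFt₀.le, hFt₁.le⟩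
  have ht : 0 < t := lt_of_lt_of_le ht₀ htmem.1
  have hmono := aux_mono K ε hK hε
  refine ⟨t / c, ⟨div_pos ht hc0, ?_⟩, ?_⟩
  · rw [hZF, mul_comm c, div_mul_cancel₀ _ hc0.ne', htF]
  · rintro τ ⟨hτ0, hτZ⟩
    have h1 : Faux K ε (c * τ) = Faux K ε t := by
      rw [← hZF τ, hτZ, ← htF]
    have h2 : c * τ = t :=
      hmono.injOn (Set.mem_Ioi.2 (mul_pos hc0 hτ0)) (Set.mem_Ioi.2 ht) h1
    field_simp
    linarith [h2]
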